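/- In the SCoRa model without embeddings (D = A and x the identity matrix, so that θ_a* = β_a*), the MAP estimator (β*, θ_0*) satisfies θ_0* = −(σ_0²/σ_β²) Σ_{a=1}^A θ_a*. -/

import Mathlib

open MeasureTheory RealInnerProductSpace

noncomputable section

/-- The cumulant generating function `Φ_μ(θ) = log ∫ exp(θ r) dμ(r)` of a measure `μ` on `ℝ`. -/
def cgfm (μ : Measure ℝ) (θ : ℝ) : ℝ := Real.log (∫ r, Real.exp (θ * r) ∂μ)

/-- `μ` has finite exponential moments: `∫ exp(θ r) dμ(r) < ∞` for every `θ`. -/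
def HasExpMoments (μ : Measure ℝ) : Prop :=
  ∀ θ : ℝ, Integrable (fun r => Real.exp (θ * r)) μ

/-- The SCoRa negative log-posterior `L(β, θ0 | D)` for a dataset consisting of a multiset `C`
of comparisons `(b, c, r)` and a multiset `Rt` of ratings `(a, t)`, with embedding columns
`x a ∈ ℝ^D`, comparison root law `f`, rating root law `g`, and prior variances `sb2 = σ_β²`,
`s02 = σ_0²`. -/
def scoraLoss {Dd A : ℕ} (x : Fin A → EuclideanSpace ℝ (Fin Dd))
    (f g : Measure ℝ) (sb2 s02 : ℝ)
    (C : Multiset (Fin A × Fin A × ℝ)) (Rt : Multiset (Fin A × ℝ))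
    (β : EuclideanSpace ℝ (Fin Dd)) (θ0 : ℝ) : ℝ :=
  ‖β‖ ^ 2 / (2 * sb2) + θ0 ^ 2 / (2 * s02)
    + (C.map (fun q =>
        cgfm f ⟪x q.1 - x q.2.1, β⟫ - q.2.2 * ⟪x q.1 - x q.2.1, β⟫)).sum
    + (Rt.map (fun q =>
        cgfm g (⟪x q.1, β⟫ - θ0) - q.2 * (⟪x q.1, β⟫ - θ0))).sum

/-- in the SCoRa model without embeddings (`D = A`, `x = I_A`, so that the
MAP scores are `θ_a* = β_a*`), the MAP estimator `(β*, θ0*)` (the minimizer of the SCoRa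
negative log-posterior) satisfies `θ0* = −(σ_0²/σ_β²) Σ_a θ_a*`. -/
theorem scora_map_threshold_mean
    {A : ℕ}
    (f g : Measure ℝ) [IsProbabilityMeasure f] [IsProbabilityMeasure g]
    (hf : HasExpMoments f) (hg : HasExpMoments g)
    (sb2 s02 : ℝ) (hsb : 0 < sb2) (hs0 : 0 < s02)
    (C : Multiset (Fin A × Fin A × ℝ)) (Rt : Multiset (Fin A × ℝ))
    (βs : EuclideanSpace ℝ (Fin A)) (θ0s : ℝ)
    (hmin : ∀ (β : EuclideanSpace ℝ (Fin A)) (θ0 : ℝ),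
      scoraLoss (fun a => EuclideanSpace.single a 1) f g sb2 s02 C Rt βs θ0s
        ≤ scoraLoss (fun a => EuclideanSpace.single a 1) f g sb2 s02 C Rt β θ0) :
    θ0s = -(s02 / sb2) * ∑ a, βs a := by
  set u : EuclideanSpace ℝ (Fin A) := WithLp.toLp 2 (fun _ => (1 : ℝ)) with hu
  set S : ℝ := ∑ a, βs a with hS
  -- inner products with singles
  have hsingle : ∀ (a : Fin A) (v : EuclideanSpace ℝ (Fin A)),
      ⟪EuclideanSpace.single a (1 : ℝ), v⟫ = v a := by
    intro a v
    simp [EuclideanSpace.inner_single_left]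
  have huβ : ⟪βs, u⟫ = S := by
    simp [hS, PiLp.inner_apply, hu, mul_comm]
  have huu : ⟪u, u⟫ = (A : ℝ) := by
    rw [hu, PiLp.inner_apply]; simp
  -- the quadratic along the perturbation direction
  have key : ∀ ε : ℝ,
      scoraLoss (fun a => EuclideanSpace.single a 1) f g sb2 s02 C Rt (βs + ε • u) (θ0s + ε)
        = scoraLoss (fun a => EuclideanSpace.single a 1) f g sb2 s02 C Rt βs θ0s
          + ε * (S / sb2 + θ0s / s02) + ε ^ 2 * ((A : ℝ) / (2 * sb2) + 1 / (2 * s02)) := by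
    intro ε
    have hnorm : ‖βs + ε • u‖ ^ 2 = ‖βs‖ ^ 2 + 2 * ε * S + ε ^ 2 * (A : ℝ) := by
      have h1 : ‖βs + ε • u‖ ^ 2 = ⟪βs + ε • u, βs + ε • u⟫ :=
        (real_inner_self_eq_norm_sq _).symm
      have h2 : ‖βs‖ ^ 2 = ⟪βs, βs⟫ := (real_inner_self_eq_norm_sq _).symm
      have h3 : ⟪u, βs⟫ = S := by rw [real_inner_comm]; exact huβ
      rw [h1, h2, inner_add_add_self, real_inner_smul_right, real_inner_smul_left,
        real_inner_smul_left, real_inner_smul_right, huβ, h3, huu]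
      ring
    have hC : (C.map (fun q =>
        cgfm f ⟪EuclideanSpace.single q.1 (1:ℝ) - EuclideanSpace.single q.2.1 1, βs + ε • u⟫
          - q.2.2 * ⟪EuclideanSpace.single q.1 (1:ℝ) - EuclideanSpace.single q.2.1 1, βs + ε • u⟫)).sum
        = (C.map (fun q =>
        cgfm f ⟪EuclideanSpace.single q.1 (1:ℝ) - EuclideanSpace.single q.2.1 1, βs⟫
          - q.2.2 * ⟪EuclideanSpace.single q.1 (1:ℝ) - EuclideanSpace.single q.2.1 1, βs⟫)).sum := by
      congr 1
      apply Multiset.map_congr rfl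
      intro q _
      have : ⟪EuclideanSpace.single q.1 (1:ℝ) - EuclideanSpace.single q.2.1 1, βs + ε • u⟫
          = ⟪EuclideanSpace.single q.1 (1:ℝ) - EuclideanSpace.single q.2.1 1, βs⟫ := by
        rw [inner_sub_left, inner_sub_left, inner_add_right, inner_add_right,
          real_inner_smul_right, real_inner_smul_right, hsingle, hsingle, hsingle, hsingle]
        simp [hu]
      rw [this]
    have hR : (Rt.map (fun q =>
        cgfm g (⟪EuclideanSpace.single q.1 (1:ℝ), βs + ε • u⟫ - (θ0s + ε))
          - q.2 * (⟪EuclideanSpace.single q.1 (1:ℝ), βs + ε • u⟫ - (θ0s + ε)))).sum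
        = (Rt.map (fun q =>
        cgfm g (⟪EuclideanSpace.single q.1 (1:ℝ), βs⟫ - θ0s)
          - q.2 * (⟪EuclideanSpace.single q.1 (1:ℝ), βs⟫ - θ0s))).sum := by
      congr 1
      apply Multiset.map_congr rfl
      intro q _
      have : ⟪EuclideanSpace.single q.1 (1:ℝ), βs + ε • u⟫ - (θ0s + ε)
          = ⟪EuclideanSpace.single q.1 (1:ℝ), βs⟫ - θ0s := by
        rw [inner_add_right, real_inner_smul_right, hsingle, hsingle]
        simp [hu]
      rw [this]
    simp only [scoraLoss, hC, hR, hnorm]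
    field_simp
    ring
  -- the quadratic is minimized at 0, so its linear coefficient vanishes
  set b : ℝ := S / sb2 + θ0s / s02 with hb
  set c : ℝ := (A : ℝ) / (2 * sb2) + 1 / (2 * s02) with hc
  have hcpos : 0 < c := by
    have : 0 ≤ (A : ℝ) / (2 * sb2) := by positivity
    have h2 : 0 < 1 / (2 * s02) := by positivity
    rw [hc]; linarith
  have hnonneg : ∀ ε : ℝ, 0 ≤ ε * b + ε ^ 2 * c := by
    intro ε
    have := hmin (βs + ε • u) (θ0s + ε)
    rw [key ε] at this
    linarith
  have hb0 : b = 0 := by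
    by_contra hne
    have h1 := hnonneg (-b / (2 * c))
    have hc' : c ≠ 0 := ne_of_gt hcpos
    have : (-b / (2 * c)) * b + (-b / (2 * c)) ^ 2 * c = -(b ^ 2) / (4 * c) := by
      field_simp; ring
    rw [this] at h1
    have hbb : 0 < b ^ 2 := by positivity
    have : -(b ^ 2) / (4 * c) < 0 := by
      apply div_neg_of_neg_of_pos <;> [linarith; positivity]
    linarith
  -- solve for θ0s
  have : S / sb2 + θ0s / s02 = 0 := hb0
  have hsb' : sb2 ≠ 0 := ne_of_gt hsb
  have hs0' : s02 ≠ 0 := ne_of_gt hs0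
  field_simp at this
  field_simp
  linarith

end
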